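/- Let V be a finite set with |V| = n ≥ 2, and let F be a family of subsets of V such that every X ∈ F satisfies ∅ ≠ X ≠ V, any two members of F are non-crossing, and no two distinct members X, Y ∈ F determine the same bi-partition (i.e., for distinct X, Y ∈ F, both X ≠ Y and X ≠ V\Y). Then |F| ≤ 2n − 3. -/

import Mathlib

/-- Two subsets `X Y` of a finite set `V` are *crossing* if `X ∩ Y`, `X \ Y`, `Y \ X`
and `V \ (X ∪ Y)` are all nonempty. -/
def Crossing {V : Type*} [Fintype V] [DecidableEq V] (X Y : Finset V) : Prop :=
  (X ∩ Y).Nonempty ∧ (X \ Y).Nonempty ∧ (Y \ X).Nonempty ∧ ((X ∪ Y)ᶜ).Nonempty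

section Aux

variable {V : Type*} [Fintype V] [DecidableEq V]

set_option linter.unusedSectionVars false

lemma crossing_symm {X Y : Finset V} (h : Crossing X Y) : Crossing Y X := by
  obtain ⟨a, b, c, d⟩ := h
  exact ⟨by rwa [Finset.inter_comm], c, b, by rwa [Finset.union_comm]⟩

lemma crossing_compl_left {X Y : Finset V} : Crossing Xᶜ Y ↔ Crossing X Y := by
  have e1 : Xᶜ ∩ Y = Y \ X := by
    ext a; simp only [Finset.mem_inter, Finset.mem_compl, Finset.mem_sdiff]; tauto
  have e2 : Xᶜ \ Y = (X ∪ Y)ᶜ := by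
    ext a; simp only [Finset.mem_sdiff, Finset.mem_compl, Finset.mem_union]; tauto
  have e3 : Y \ Xᶜ = X ∩ Y := by
    ext a; simp only [Finset.mem_sdiff, Finset.mem_compl, Finset.mem_inter, not_not]; tauto
  have e4 : (Xᶜ ∪ Y)ᶜ = X \ Y := by
    ext a; simp only [Finset.mem_compl, Finset.mem_union, Finset.mem_sdiff, not_or, not_not]
  unfold Crossing
  rw [e1, e2, e3, e4]
  tauto

/-- Laminar family of sets of size at least 2 inside `S` has at most `S.card - 1` members. -/
lemma laminar_big (S : Finset V) : ∀ L : Finset (Finset V),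
    (∀ X ∈ L, 2 ≤ X.card ∧ X ⊆ S) →
    (∀ X ∈ L, ∀ Y ∈ L, X ⊆ Y ∨ Y ⊆ X ∨ X ∩ Y = ∅) →
    L.card ≤ S.card - 1 := by
  induction S using Finset.strongInduction with
  | _ S ih =>
    intro L hL hlam
    rcases L.eq_empty_or_nonempty with rfl | hne
    · simp
    obtain ⟨X, hX, hmin⟩ := Finset.exists_min_image L Finset.card hne
    have hX2 : 2 ≤ X.card := (hL X hX).1
    have hXS : X ⊆ S := (hL X hX).2
    obtain ⟨x, hx⟩ : X.Nonempty := Finset.card_pos.mp (by omega)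
    obtain ⟨y, hy, hyx⟩ : ∃ y ∈ X, y ≠ x :=
      Finset.exists_mem_ne (by omega) x
    set S' := S \ X.erase x with hS'def
    have hss : S' ⊂ S := by
      refine Finset.sdiff_ssubset ((Finset.erase_subset x X).trans hXS) ?_
      exact ⟨y, Finset.mem_erase.mpr ⟨hyx, hy⟩⟩
    -- every other member either contains X or is disjoint from it
    have key : ∀ Y ∈ L, Y ≠ X → X ⊆ Y ∨ X ∩ Y = ∅ := by
      intro Y hY hne'
      rcases hlam X hX Y hY with h | h | h
      · exact Or.inl h
      · exact absurd (Finset.eq_of_subset_of_card_le h (hmin Y hY)) hne'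
      · exact Or.inr h
    classical
    set f : Finset V → Finset V := fun Y => if X ⊆ Y then (Y \ X) ∪ {x} else Y with hfdef
    set L' := (L.erase X).image f with hL'def
    have hdisj : ∀ Y : Finset V, X ∩ Y = ∅ → ∀ a, a ∈ X → a ∉ Y := by
      intro Y h a haX haY
      exact (Finset.eq_empty_iff_forall_notMem.mp h a) (Finset.mem_inter.mpr ⟨haX, haY⟩)
    -- basic facts about f Y
    have hfsub : ∀ Y ∈ L, Y ≠ X → X ⊆ Y → f Y = (Y \ X) ∪ {x} := by
      intro Y _ _ h; simp only [hfdef, if_pos h]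
    have hfdis : ∀ Y ∈ L, Y ≠ X → X ∩ Y = ∅ → f Y = Y := by
      intro Y hY hne' h
      have : ¬ X ⊆ Y := by
        intro hsub
        exact hdisj Y h x hx (hsub hx)
      simp only [hfdef, if_neg this]
    have hprops : ∀ Y ∈ L, Y ≠ X → 2 ≤ (f Y).card ∧ f Y ⊆ S' := by
      intro Y hY hne'
      rcases key Y hY hne' with h | h
      · rw [hfsub Y hY hne' h]
        have hxY : x ∉ Y \ X := by simp [hx]
        have hssub : X ⊂ Y := Finset.ssubset_iff_subset_ne.mpr ⟨h, fun he => hne' he.symm⟩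
        have hcard : (Y \ X).card = Y.card - X.card := Finset.card_sdiff_of_subset h
        have hYX : X.card < Y.card := Finset.card_lt_card hssub
        constructor
        · rw [Finset.card_union_of_disjoint (by simp [hxY])]
          simp only [Finset.card_singleton]
          omega
        · intro a ha
          rcases Finset.mem_union.mp ha with ha | ha
          · rcases Finset.mem_sdiff.mp ha with ⟨haY, haX⟩
            refine Finset.mem_sdiff.mpr ⟨(hL Y hY).2 haY, ?_⟩
            simp [Finset.mem_erase, haX]
          · rcases Finset.mem_singleton.mp ha with rfl
            exact Finset.mem_sdiff.mpr ⟨hXS hx, by simp⟩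
      · rw [hfdis Y hY hne' h]
        refine ⟨(hL Y hY).1, ?_⟩
        intro a ha
        refine Finset.mem_sdiff.mpr ⟨(hL Y hY).2 ha, ?_⟩
        intro hmem
        exact hdisj Y h a (Finset.mem_of_mem_erase hmem) ha
    -- injectivity of f on L.erase X
    have hinj : Set.InjOn f (L.erase X : Set (Finset V)) := by
      intro Y hY' Z hZ' heq
      have hY : Y ∈ L ∧ Y ≠ X := by
        have := Finset.mem_coe.mp hY'; rw [Finset.mem_erase] at this; exact ⟨this.2, this.1⟩
      have hZ : Z ∈ L ∧ Z ≠ X := by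
        have := Finset.mem_coe.mp hZ'; rw [Finset.mem_erase] at this; exact ⟨this.2, this.1⟩
      rcases key Y hY.1 hY.2 with h1 | h1 <;> rcases key Z hZ.1 hZ.2 with h2 | h2
      · rw [hfsub Y hY.1 hY.2 h1, hfsub Z hZ.1 hZ.2 h2] at heq
        have hxY : x ∉ Y \ X := by simp [hx]
        have hxZ : x ∉ Z \ X := by simp [hx]
        have e : Y \ X = Z \ X := by
          have := congrArg (fun s => s.erase x) heq
          simpa [Finset.erase_union_distrib, Finset.erase_eq_of_notMem hxY,
            Finset.erase_eq_of_notMem hxZ] using this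
        calc Y = (Y \ X) ∪ X := (Finset.sdiff_union_of_subset h1).symm
          _ = (Z \ X) ∪ X := by rw [e]
          _ = Z := Finset.sdiff_union_of_subset h2
      · exfalso
        rw [hfsub Y hY.1 hY.2 h1, hfdis Z hZ.1 hZ.2 h2] at heq
        have : x ∈ Z := heq ▸ (Finset.mem_union_right _ (Finset.mem_singleton_self x))
        exact hdisj Z h2 x hx this
      · exfalso
        rw [hfdis Y hY.1 hY.2 h1, hfsub Z hZ.1 hZ.2 h2] at heq
        have : x ∈ Y := heq ▸ (Finset.mem_union_right _ (Finset.mem_singleton_self x))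
        exact hdisj Y h1 x hx this
      · rwa [hfdis Y hY.1 hY.2 h1, hfdis Z hZ.1 hZ.2 h2] at heq
    -- laminarity of the image
    have hlam' : ∀ A ∈ L', ∀ B ∈ L', A ⊆ B ∨ B ⊆ A ∨ A ∩ B = ∅ := by
      intro A hA B hB
      obtain ⟨Y, hYe, rfl⟩ := Finset.mem_image.mp hA
      obtain ⟨Z, hZe, rfl⟩ := Finset.mem_image.mp hB
      obtain ⟨hYne, hYL⟩ := Finset.mem_erase.mp hYe
      obtain ⟨hZne, hZL⟩ := Finset.mem_erase.mp hZe
      rcases key Y hYL hYne with h1 | h1 <;> rcases key Z hZL hZne with h2 | h2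
      · rw [hfsub Y hYL hYne h1, hfsub Z hZL hZne h2]
        rcases hlam Y hYL Z hZL with h | h | h
        · exact Or.inl (Finset.union_subset_union (Finset.sdiff_subset_sdiff h le_rfl) le_rfl)
        · exact Or.inr (Or.inl (Finset.union_subset_union (Finset.sdiff_subset_sdiff h le_rfl) le_rfl))
        · exfalso
          exact (Finset.eq_empty_iff_forall_notMem.mp h x)
            (Finset.mem_inter.mpr ⟨h1 hx, h2 hx⟩)
      · rw [hfsub Y hYL hYne h1, hfdis Z hZL hZne h2]
        rcases hlam Y hYL Z hZL with h | h | h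
        · exfalso
          exact hdisj Z h2 x hx (h (h1 hx))
        · refine Or.inr (Or.inl ?_)
          intro a ha
          refine Finset.mem_union_left _ (Finset.mem_sdiff.mpr ⟨h ha, ?_⟩)
          intro haX
          exact hdisj Z h2 a haX ha
        · refine Or.inr (Or.inr ?_)
          apply Finset.eq_empty_iff_forall_notMem.mpr
          intro a ha
          rcases Finset.mem_inter.mp ha with ⟨ha1, ha2⟩
          rcases Finset.mem_union.mp ha1 with ha1 | ha1
          · exact (Finset.eq_empty_iff_forall_notMem.mp h a)
              (Finset.mem_inter.mpr ⟨(Finset.mem_sdiff.mp ha1).1, ha2⟩)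
          · rcases Finset.mem_singleton.mp ha1 with rfl
            exact hdisj Z h2 a hx ha2
      · rw [hfdis Y hYL hYne h1, hfsub Z hZL hZne h2]
        rcases hlam Y hYL Z hZL with h | h | h
        · refine Or.inl ?_
          intro a ha
          refine Finset.mem_union_left _ (Finset.mem_sdiff.mpr ⟨h ha, ?_⟩)
          intro haX
          exact hdisj Y h1 a haX ha
        · exfalso
          exact hdisj Y h1 x hx (h (h2 hx))
        · refine Or.inr (Or.inr ?_)
          apply Finset.eq_empty_iff_forall_notMem.mpr
          intro a ha
          rcases Finset.mem_inter.mp ha with ⟨ha1, ha2⟩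
          rcases Finset.mem_union.mp ha2 with ha2 | ha2
          · exact (Finset.eq_empty_iff_forall_notMem.mp h a)
              (Finset.mem_inter.mpr ⟨ha1, (Finset.mem_sdiff.mp ha2).1⟩)
          · rcases Finset.mem_singleton.mp ha2 with rfl
            exact hdisj Y h1 a hx ha1
      · rw [hfdis Y hYL hYne h1, hfdis Z hZL hZne h2]
        exact hlam Y hYL Z hZL
    have hL'prop : ∀ A ∈ L', 2 ≤ A.card ∧ A ⊆ S' := by
      intro A hA
      obtain ⟨Y, hYe, rfl⟩ := Finset.mem_image.mp hA
      obtain ⟨hYne, hYL⟩ := Finset.mem_erase.mp hYe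
      exact hprops Y hYL hYne
    have hbound : L'.card ≤ S'.card - 1 := ih S' hss L' hL'prop hlam'
    have hcard1 : L'.card = (L.erase X).card := Finset.card_image_of_injOn hinj
    have hcard2 : (L.erase X).card = L.card - 1 := Finset.card_erase_of_mem hX
    have hcard3 : S'.card = S.card - (X.card - 1) := by
      rw [hS'def, Finset.card_sdiff_of_subset ((Finset.erase_subset x X).trans hXS),
        Finset.card_erase_of_mem hx]
    have hXcard : X.card ≤ S.card := Finset.card_le_card hXS
    have hLpos : 1 ≤ L.card := Finset.card_pos.mpr hne
    omega

/-- Laminar family of nonempty sets inside `S` has at most `2*S.card - 1` members. -/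
lemma laminar_bound (S : Finset V) (L : Finset (Finset V))
    (h1 : ∀ X ∈ L, X.Nonempty ∧ X ⊆ S)
    (h2 : ∀ X ∈ L, ∀ Y ∈ L, X ⊆ Y ∨ Y ⊆ X ∨ X ∩ Y = ∅) :
    L.card ≤ 2 * S.card - 1 := by
  classical
  rcases L.eq_empty_or_nonempty with rfl | hne
  · simp
  have hSpos : 1 ≤ S.card := by
    obtain ⟨X, hX⟩ := hne
    obtain ⟨⟨a, ha⟩, hXS⟩ := h1 X hX
    exact Finset.card_pos.mpr ⟨a, hXS ha⟩
  set L1 := L.filter (fun X => X.card = 1) with hL1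
  set L2 := L.filter (fun X => ¬ X.card = 1) with hL2
  have hsplit : L1.card + L2.card = L.card :=
    Finset.card_filter_add_card_filter_not (p := fun X : Finset V => X.card = 1)
  have hb1 : L1.card ≤ S.card := by
    have hsub : L1 ⊆ S.powersetCard 1 := by
      intro X hX
      rcases Finset.mem_filter.mp hX with ⟨hXL, hXc⟩
      exact Finset.mem_powersetCard.mpr ⟨(h1 X hXL).2, hXc⟩
    calc L1.card ≤ (S.powersetCard 1).card := Finset.card_le_card hsub
      _ = S.card.choose 1 := Finset.card_powersetCard 1 S
      _ = S.card := Nat.choose_one_right _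
  have hb2 : L2.card ≤ S.card - 1 := by
    apply laminar_big S L2
    · intro X hX
      rcases Finset.mem_filter.mp hX with ⟨hXL, hXc⟩
      have := (h1 X hXL).1
      have h1le : 1 ≤ X.card := Finset.card_pos.mpr this
      exact ⟨by omega, (h1 X hXL).2⟩
    · intro X hX Y hY
      exact h2 X (Finset.mem_of_mem_filter X hX) Y (Finset.mem_of_mem_filter Y hY)
  omega

end Aux

/-- A laminar family of proper nonempty subsets of an `n`-element set (`n ≥ 2`), with
pairwise distinct bi-partitions, has at most `2n - 3` members. -/
theorem laminar_family_card_bound {V : Type*} [Fintype V] [DecidableEq V]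
    (hn : 2 ≤ Fintype.card V) (F : Finset (Finset V))
    (hproper : ∀ X ∈ F, X.Nonempty ∧ X ≠ Finset.univ)
    (hnc : ∀ X ∈ F, ∀ Y ∈ F, ¬ Crossing X Y)
    (hdist : ∀ X ∈ F, ∀ Y ∈ F, X ≠ Y → X ≠ Yᶜ) :
    F.card ≤ 2 * Fintype.card V - 3 := by
  classical
  have hpos : 0 < Fintype.card V := by omega
  obtain ⟨v⟩ : Nonempty V := Fintype.card_pos_iff.mp hpos
  set g : Finset V → Finset V := fun X => if v ∈ X then Xᶜ else X with hg
  set F' := F.image g with hF'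
  -- injectivity
  have hginj : Set.InjOn g (F : Set (Finset V)) := by
    intro X hX Y hY heq
    by_cases hvX : v ∈ X <;> by_cases hvY : v ∈ Y <;>
      simp only [hg, if_pos, if_neg, hvX, hvY, if_true, if_false] at heq
    · exact compl_injective heq
    · exfalso
      have hXY : X ≠ Y := fun h => hvY (h ▸ hvX)
      exact hdist X hX Y hY hXY (by rw [← heq, compl_compl])
    · exfalso
      have hXY : X ≠ Y := fun h => hvX (h ▸ hvY)
      exact hdist X hX Y hY hXY heq
    · exact heq
  have hcardF : F'.card = F.card := Finset.card_image_of_injOn hginj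
  -- properties of g X
  have hgmem : ∀ X ∈ F, (g X).Nonempty ∧ g X ⊆ Finset.univ.erase v := by
    intro X hX
    obtain ⟨hXne, hXuniv⟩ := hproper X hX
    by_cases hvX : v ∈ X <;> simp only [hg, if_pos, if_neg, hvX, if_true, if_false]
    · constructor
      · rw [Finset.nonempty_iff_ne_empty]
        intro h
        exact hXuniv (by simpa using congrArg compl h)
      · intro a ha
        refine Finset.mem_erase.mpr ⟨?_, Finset.mem_univ a⟩
        intro h
        exact (Finset.mem_compl.mp ha) (h ▸ hvX)
    · refine ⟨hXne, ?_⟩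
      intro a ha
      refine Finset.mem_erase.mpr ⟨?_, Finset.mem_univ a⟩
      rintro rfl
      exact hvX ha
  have hgnc : ∀ X ∈ F, ∀ Y ∈ F, ¬ Crossing (g X) (g Y) := by
    intro X hX Y hY hc
    apply hnc X hX Y hY
    by_cases hvX : v ∈ X <;> by_cases hvY : v ∈ Y <;>
      simp only [hg, if_pos, if_neg, hvX, hvY, if_true, if_false] at hc
    · exact crossing_compl_left.mp (crossing_symm (crossing_compl_left.mp (crossing_symm hc)))
    · exact crossing_compl_left.mp hc
    · exact crossing_symm (crossing_compl_left.mp (crossing_symm hc))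
    · exact hc
  -- laminarity of F'
  have hlam : ∀ A ∈ F', ∀ B ∈ F', A ⊆ B ∨ B ⊆ A ∨ A ∩ B = ∅ := by
    intro A hA B hB
    obtain ⟨X, hXF, rfl⟩ := Finset.mem_image.mp hA
    obtain ⟨Y, hYF, rfl⟩ := Finset.mem_image.mp hB
    have hnc' := hgnc X hXF Y hYF
    have hvA : v ∉ g X := fun h => (Finset.mem_erase.mp ((hgmem X hXF).2 h)).1 rfl
    have hvB : v ∉ g Y := fun h => (Finset.mem_erase.mp ((hgmem Y hYF).2 h)).1 rfl
    have hcompl : ((g X ∪ g Y)ᶜ).Nonempty :=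
      ⟨v, Finset.mem_compl.mpr (fun h => by
        rcases Finset.mem_union.mp h with h | h
        · exact hvA h
        · exact hvB h)⟩
    unfold Crossing at hnc'
    push_neg at hnc'
    by_cases h1 : (g X ∩ g Y).Nonempty
    · by_cases h2 : (g X \ g Y).Nonempty
      · have h3 := hnc' h1 h2
        by_cases h3' : (g Y \ g X).Nonempty
        · exact absurd (h3 h3') hcompl.ne_empty
        · refine Or.inr (Or.inl ?_)
          rw [Finset.not_nonempty_iff_eq_empty, Finset.sdiff_eq_empty_iff_subset] at h3'
          exact h3'
      · refine Or.inl ?_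
        rw [Finset.not_nonempty_iff_eq_empty, Finset.sdiff_eq_empty_iff_subset] at h2
        exact h2
    · rw [Finset.not_nonempty_iff_eq_empty] at h1
      exact Or.inr (Or.inr h1)
  have hF'prop : ∀ A ∈ F', A.Nonempty ∧ A ⊆ Finset.univ.erase v := by
    intro A hA
    obtain ⟨X, hXF, rfl⟩ := Finset.mem_image.mp hA
    exact hgmem X hXF
  have hbound := laminar_bound (Finset.univ.erase v) F' hF'prop hlam
  have hScard : (Finset.univ.erase v).card = Fintype.card V - 1 := by
    rw [Finset.card_erase_of_mem (Finset.mem_univ v), Finset.card_univ]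
  omega
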